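/- Fix 0 < η < 1 and φ ∈ (0, π/2). Then ∫_φ^{φ+π} (dθ/π) · sin(θ − φ)/√(cos²θ/√η + sin²θ·√η) = (2/π)·[ η^{−1/4}·cos φ·arsinh(√(1/η − 1)·cos φ)/√(1/η − 1) + η^{1/4}·sin φ·arcsin(√(1 − η)·sin φ)/√(1 − η) ]. -/

import Mathlib

private lemma rpow_quarter (η : ℝ) (h : 0 < η) :
    η ^ ((1:ℝ)/4) = Real.sqrt (Real.sqrt η) := by
  rw [Real.sqrt_eq_rpow, Real.sqrt_eq_rpow, ← Real.rpow_mul h.le]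
  norm_num

private lemma rpow_neg_quarter (η : ℝ) (h : 0 < η) :
    η ^ (-(1:ℝ)/4) = (Real.sqrt (Real.sqrt η))⁻¹ := by
  rw [show (-(1:ℝ)/4) = -((1:ℝ)/4) by norm_num, Real.rpow_neg h.le, rpow_quarter η h]

set_option maxHeartbeats 1000000 in
theorem angular_s_function_eval (η φ : ℝ) (hη0 : 0 < η) (hη1 : η < 1)
    (hφ0 : 0 < φ) (hφ : φ < Real.pi / 2) :
    ∫ θ in φ..(φ + Real.pi),
        (1 / Real.pi) * (Real.sin (θ - φ) /
          Real.sqrt (Real.cos θ ^ 2 / Real.sqrt η + Real.sin θ ^ 2 * Real.sqrt η))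
      = (2 / Real.pi) *
          (η ^ (-(1 : ℝ) / 4) * Real.cos φ *
              Real.arsinh (Real.sqrt (1 / η - 1) * Real.cos φ) / Real.sqrt (1 / η - 1)
            + η ^ ((1 : ℝ) / 4) * Real.sin φ *
                Real.arcsin (Real.sqrt (1 - η) * Real.sin φ) / Real.sqrt (1 - η)) := by
  have hπ : (0:ℝ) < Real.pi := Real.pi_pos
  set s : ℝ := Real.sqrt η with hs_def
  have hs0 : 0 < s := Real.sqrt_pos.2 hη0
  have hs2 : s ^ 2 = η := Real.sq_sqrt hη0.le
  have hs1 : s < 1 := by nlinarith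
  set a : ℝ := 1 / s - s with ha_def
  have ha0 : 0 < a := by
    have h : s < 1 / s := by rw [lt_div_iff₀ hs0]; nlinarith
    simp only [ha_def]; linarith
  have hsa : (0:ℝ) < Real.sqrt a := Real.sqrt_pos.2 ha0
  have h1η : 1 / η - 1 = a / s := by
    rw [ha_def, ← hs2]; field_simp
  have h2η : 1 - η = a * s := by
    rw [ha_def, ← hs2]; field_simp
  set c1 : ℝ := Real.sqrt (1 / η - 1) with hc1_def
  set c2 : ℝ := Real.sqrt (1 - η) with hc2_def
  have hc1as : c1 = Real.sqrt (a / s) := by rw [hc1_def, h1η]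
  have hc2as : c2 = Real.sqrt (a * s) := by rw [hc2_def, h2η]
  have hc10 : 0 < c1 := by rw [hc1as]; exact Real.sqrt_pos.2 (div_pos ha0 hs0)
  have hc20 : 0 < c2 := by rw [hc2as]; exact Real.sqrt_pos.2 (mul_pos ha0 hs0)
  have hc1sq : c1 ^ 2 = a / s := by
    rw [hc1as]; exact Real.sq_sqrt (div_nonneg ha0.le hs0.le)
  have hc2sq : c2 ^ 2 = a * s := by
    rw [hc2as]; exact Real.sq_sqrt (mul_pos ha0 hs0).le
  have hc21 : c2 < 1 := by
    nlinarith [hc2sq, h2η, hc20]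
  have hsqs : 0 < Real.sqrt s := Real.sqrt_pos.2 hs0
  -- key sqrt identities for the final algebra
  have hss : Real.sqrt s * c1 = Real.sqrt a := by
    rw [hc1as, ← Real.sqrt_mul hs0.le]
    congr 1
    field_simp
  have hsc2 : Real.sqrt a * Real.sqrt s = c2 := by
    rw [hc2as, ← Real.sqrt_mul ha0.le]
  -- the antiderivative
  set F : ℝ → ℝ := fun θ => (1 / Real.pi) *
      (-(Real.cos φ / Real.sqrt a) * Real.arsinh (c1 * Real.cos θ)
        - Real.sin φ / Real.sqrt a * Real.arcsin (c2 * Real.sin θ)) with hF_def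
  set f : ℝ → ℝ := fun θ => (1 / Real.pi) * (Real.sin (θ - φ) /
      Real.sqrt (Real.cos θ ^ 2 / s + Real.sin θ ^ 2 * s)) with hf_def
  -- positivity of the radicand
  have hrad : ∀ θ : ℝ, 0 < Real.cos θ ^ 2 / s + Real.sin θ ^ 2 * s := by
    intro θ
    have h1 : Real.sin θ ^ 2 + Real.cos θ ^ 2 = 1 := Real.sin_sq_add_cos_sq θ
    have hsinv : s ≤ 1 / s := by rw [le_div_iff₀ hs0]; nlinarith
    have h2 : Real.cos θ ^ 2 * s ≤ Real.cos θ ^ 2 / s := by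
      rw [div_eq_mul_one_div]
      exact mul_le_mul_of_nonneg_left hsinv (sq_nonneg _)
    nlinarith [sq_nonneg (Real.sin θ), sq_nonneg (Real.cos θ)]
  have hD : ∀ θ : ℝ, 0 < Real.sqrt (Real.cos θ ^ 2 / s + Real.sin θ ^ 2 * s) :=
    fun θ => Real.sqrt_pos.2 (hrad θ)
  -- derivative of F
  have hderiv : ∀ θ ∈ Set.uIcc φ (φ + Real.pi), HasDerivAt F (f θ) θ := by
    intro θ _
    have h1 : HasDerivAt (fun t => c1 * Real.cos t) (c1 * (-Real.sin θ)) θ :=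
      (Real.hasDerivAt_cos θ).const_mul c1
    have h2 : HasDerivAt (fun t => Real.arsinh (c1 * Real.cos t))
        ((Real.sqrt (1 + (c1 * Real.cos θ) ^ 2))⁻¹ * (c1 * (-Real.sin θ))) θ :=
      (Real.hasDerivAt_arsinh _).comp θ h1
    have h3 : HasDerivAt (fun t => c2 * Real.sin t) (c2 * Real.cos θ) θ :=
      (Real.hasDerivAt_sin θ).const_mul c2
    have hb : |c2 * Real.sin θ| < 1 := by
      rw [abs_mul, abs_of_pos hc20]
      calc c2 * |Real.sin θ| ≤ c2 * 1 :=
            mul_le_mul_of_nonneg_left (Real.abs_sin_le_one θ) hc20.le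
        _ < 1 := by linarith
    have hb' := abs_lt.1 hb
    have hb1 : c2 * Real.sin θ ≠ -1 := by intro h; rw [h] at hb; simp at hb
    have hb2 : c2 * Real.sin θ ≠ 1 := by intro h; rw [h] at hb; simp at hb
    have h4 : HasDerivAt (fun t => Real.arcsin (c2 * Real.sin t))
        (1 / Real.sqrt (1 - (c2 * Real.sin θ) ^ 2) * (c2 * Real.cos θ)) θ :=
      (Real.hasDerivAt_arcsin hb1 hb2).comp (h := fun t => c2 * Real.sin t) θ h3
    have h5 := ((h2.const_mul (-(Real.cos φ / Real.sqrt a))).sub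
        (h4.const_mul (Real.sin φ / Real.sqrt a))).const_mul (1 / Real.pi)
    refine h5.congr_deriv ?_; symm
    -- algebra: rewrite f θ
    set D := Real.sqrt (Real.cos θ ^ 2 / s + Real.sin θ ^ 2 * s) with hDdef
    have hDpos : 0 < D := hD θ
    have hP1 : 0 < Real.sqrt (1 + (c1 * Real.cos θ) ^ 2) :=
      Real.sqrt_pos.2 (by positivity)
    have hP2 : 0 < Real.sqrt (1 - (c2 * Real.sin θ) ^ 2) :=
      Real.sqrt_pos.2 (by have h := (sq_lt_one_iff_abs_lt_one _).2 hb; linarith)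
    have hpy : Real.sin θ ^ 2 + Real.cos θ ^ 2 = 1 := Real.sin_sq_add_cos_sq θ
    have hE1 : c1 * D = Real.sqrt a * Real.sqrt (1 + (c1 * Real.cos θ) ^ 2) := by
      have hX : 1 + (c1 * Real.cos θ) ^ 2 = 1 + a / s * Real.cos θ ^ 2 := by
        rw [mul_pow, hc1sq]
      rw [hX, hc1as, hDdef, ← Real.sqrt_mul (div_nonneg ha0.le hs0.le),
        ← Real.sqrt_mul ha0.le]
      congr 1
      have hinv : s * (1/s) = 1 := mul_one_div_cancel hs0.ne'
      rw [ha_def]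
      linear_combination ((1/s - s) * s * (1/s)) * hpy + (1/s - s) * hinv
    have hE2 : c2 * D = Real.sqrt a * Real.sqrt (1 - (c2 * Real.sin θ) ^ 2) := by
      have hY : 1 - (c2 * Real.sin θ) ^ 2 = 1 - a * s * Real.sin θ ^ 2 := by
        rw [mul_pow, hc2sq]
      rw [hY, hc2as, hDdef, ← Real.sqrt_mul (mul_pos ha0 hs0).le,
        ← Real.sqrt_mul ha0.le]
      congr 1
      have hinv : s * (1/s) = 1 := mul_one_div_cancel hs0.ne'
      rw [ha_def]
      linear_combination ((1/s - s) * s * (1/s)) * hpy + (1/s - s) * hinv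
    have k1 : c1 / (Real.sqrt a * Real.sqrt (1 + (c1 * Real.cos θ) ^ 2)) = 1 / D := by
      rw [div_eq_div_iff (mul_pos hsa hP1).ne' hDpos.ne', one_mul]
      exact hE1
    have k2 : c2 / (Real.sqrt a * Real.sqrt (1 - (c2 * Real.sin θ) ^ 2)) = 1 / D := by
      rw [div_eq_div_iff (mul_pos hsa hP2).ne' hDpos.ne', one_mul]
      exact hE2
    have hsin : Real.sin (θ - φ) = Real.sin θ * Real.cos φ - Real.cos θ * Real.sin φ :=
      Real.sin_sub θ φ
    simp only [hf_def]
    rw [hsin]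
    linear_combination (-(1 / Real.pi) * Real.sin θ * Real.cos φ) * k1
      + ((1 / Real.pi) * Real.cos θ * Real.sin φ) * k2
  -- integrability
  have hcont : Continuous f := by
    refine continuous_const.mul (Continuous.div (by fun_prop) (by fun_prop)
      fun x => (hD x).ne')
  have key : ∫ θ in φ..(φ + Real.pi), f θ = F (φ + Real.pi) - F φ :=
    intervalIntegral.integral_eq_sub_of_hasDerivAt hderiv
      (hcont.intervalIntegrable _ _)
  simp only [hf_def] at key
  rw [key]
  -- endpoint evaluation
  simp only [hF_def, Real.cos_add_pi, Real.sin_add_pi, mul_neg, Real.arsinh_neg,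
    Real.arcsin_neg]
  have hq : η ^ ((1:ℝ)/4) = Real.sqrt s := rpow_quarter η hη0
  have hqneg : η ^ (-(1:ℝ)/4) = (Real.sqrt s)⁻¹ := rpow_neg_quarter η hη0
  rw [hq, hqneg]
  have r1 : Real.cos φ / Real.sqrt a = (Real.sqrt s)⁻¹ * Real.cos φ / c1 := by
    rw [← hss, div_mul_eq_div_div, div_eq_inv_mul (Real.cos φ) (Real.sqrt s)]
  have r2 : Real.sin φ / Real.sqrt a = Real.sqrt s * Real.sin φ / c2 := by
    rw [← hsc2, mul_comm (Real.sqrt a) (Real.sqrt s),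
      mul_div_mul_left _ _ (Real.sqrt_pos.2 hs0).ne']
  linear_combination (2 / Real.pi) * Real.arsinh (c1 * Real.cos φ) * r1
    + (2 / Real.pi) * Real.arcsin (c2 * Real.sin φ) * r2
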